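/- arXiv:2303.09613 — 2 statements merged into one kernel-verified Lean document; each statement's English description precedes it below -/
import Mathlib

section
/- Let f : ℝ → ℝ be differentiable, let y : ℝ → ℝ satisfy y'(t) = f(y(t)), and let μ : ℝ → ℝ be differentiable at a point x ≠ x₀. Suppose the identity y(t) = y(x₀) + f(μ(t))·(t − x₀) holds for all t in some open neighborhood of x, and that f'(μ(x)) ≠ 0. Then μ'(x) = (f(y(x)) − f(μ(x))) / (f'(μ(x))·(x − x₀)), and, substituting the identity for y(x), μ'(x) = (f(y(x₀) + f(μ(x))·(x − x₀)) − f(μ(x))) / (f'(μ(x))·(x − x₀)). -/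
/-- Differentiating the Taylor–Lagrange remainder identity
`y t = y x₀ + f (μ t) * (t - x₀)` yields the ODE
`μ' = (f(y) - f(μ)) / (f'(μ)(x - x₀))` for the Taylor–Lagrange function `μ`,
and substituting the identity for `y x` gives
`μ' = (f(y₀ + f(μ)(x - x₀)) - f(μ)) / (f'(μ)(x - x₀))`. -/
theorem taylor_lagrange_function_ode
    (f y μ : ℝ → ℝ) (x₀ x : ℝ)
    (hf : Differentiable ℝ f)
    (hy : ∀ t, HasDerivAt y (f (y t)) t)
    (hμ : DifferentiableAt ℝ μ x)
    (hxne : x ≠ x₀)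
    (hid : ∀ᶠ t in nhds x, y t = y x₀ + f (μ t) * (t - x₀))
    (hfy : deriv f (μ x) ≠ 0) :
    deriv μ x = (f (y x) - f (μ x)) / (deriv f (μ x) * (x - x₀)) ∧
    deriv μ x =
      (f (y x₀ + f (μ x) * (x - x₀)) - f (μ x)) / (deriv f (μ x) * (x - x₀)) := by
  have hcomp : HasDerivAt (fun t => f (μ t)) (deriv f (μ x) * deriv μ x) x :=
    (hf (μ x)).hasDerivAt.comp x hμ.hasDerivAt
  have hsub : HasDerivAt (fun t : ℝ => t - x₀) 1 x := by
    simpa using (hasDerivAt_id x).sub_const x₀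
  have h1 : HasDerivAt (fun t => y x₀ + f (μ t) * (t - x₀))
      (deriv f (μ x) * deriv μ x * (x - x₀) + f (μ x) * 1) x :=
    (hcomp.mul hsub).const_add _
  have h2 : HasDerivAt y
      (deriv f (μ x) * deriv μ x * (x - x₀) + f (μ x) * 1) x :=
    h1.congr_of_eventuallyEq hid
  have key : f (y x) = deriv f (μ x) * deriv μ x * (x - x₀) + f (μ x) * 1 :=
    (hy x).unique h2
  have hx : x - x₀ ≠ 0 := sub_ne_zero.mpr hxne
  have hidx : y x = y x₀ + f (μ x) * (x - x₀) := hid.self_of_nhds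
  constructor
  · field_simp
    linarith [key]
  · rw [← hidx]
    field_simp
    linarith [key]
end

section
/- Let f : ℝ → ℝ be continuously differentiable with f'(u) > 0 for all u ∈ ℝ, and let y : ℝ → ℝ be differentiable on [x₀, X] with y'(t) = f(y(t)) for all t ∈ [x₀, X] and y(x₀) = y₀. Then for every x ∈ (x₀, X] the difference quotient (y(x) − y₀)/(x − x₀) lies in the range of f, so that μ(x) := f⁻¹((y(x) − y₀)/(x − x₀)) is well defined; the function μ so defined satisfies y(x) = y₀ + f(μ(x))·(x − x₀) for all x ∈ (x₀, X], and μ is differentiable on the open interval (x₀, X). -/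
lemma invFun_diff (f : ℝ → ℝ) (hf : ContDiff ℝ 1 f) (hf' : ∀ u : ℝ, 0 < deriv f u)
    (a : ℝ) : DifferentiableAt ℝ (Function.invFun f) (f a) := by
  have hinj : Function.Injective f := (strictMono_of_deriv_pos hf').injective
  have hsd : HasStrictDerivAt f (deriv f a) a := hf.contDiffAt.hasStrictDerivAt one_ne_zero
  have hne : deriv f a ≠ 0 := (hf' a).ne'
  have hloc : HasStrictDerivAt (hsd.localInverse f _ a hne) (deriv f a)⁻¹ (f a) :=
    hsd.to_localInverse hne
  have hev : ∀ᶠ z in nhds (f a), f (hsd.localInverse f _ a hne z) = z :=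
    HasStrictFDerivAt.eventually_right_inverse _
  have heq : (Function.invFun f) =ᶠ[nhds (f a)] hsd.localInverse f _ a hne := by
    filter_upwards [hev] with z hz
    exact hinj ((Function.invFun_eq ⟨_, hz⟩).trans hz.symm)
  exact hloc.hasDerivAt.differentiableAt.congr_of_eventuallyEq heq

/-- When `f` is continuously differentiable with `f' > 0` everywhere and `y`
solves `y' = f(y)`, `y x₀ = y₀` on `[x₀, X]`, the difference quotient
`(y x - y₀)/(x - x₀)` lies in the range of `f` for every `x ∈ (x₀, X]`, so the
Taylor–Lagrange function `μ x = f⁻¹((y x - y₀)/(x - x₀))` is well defined; it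
satisfies `y x = y₀ + f (μ x) * (x - x₀)` on `(x₀, X]` and is differentiable on
`(x₀, X)`. -/
theorem taylor_lagrange_function_wellDefined
    (f y : ℝ → ℝ) (x₀ X y₀ : ℝ)
    (hf : ContDiff ℝ 1 f)
    (hf' : ∀ u : ℝ, 0 < deriv f u)
    (hX : x₀ < X)
    (hy : ∀ t ∈ Set.Icc x₀ X, HasDerivAt y (f (y t)) t)
    (hy₀ : y x₀ = y₀) :
    (∀ x ∈ Set.Ioc x₀ X, (y x - y₀) / (x - x₀) ∈ Set.range f) ∧
    (∀ x ∈ Set.Ioc x₀ X,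
      y x = y₀ + f (Function.invFun f ((y x - y₀) / (x - x₀))) * (x - x₀)) ∧
    DifferentiableOn ℝ (fun x => Function.invFun f ((y x - y₀) / (x - x₀)))
      (Set.Ioo x₀ X) := by
  have hrange : ∀ x ∈ Set.Ioc x₀ X, (y x - y₀) / (x - x₀) ∈ Set.range f := by
    intro x hx
    have hsub : Set.Icc x₀ x ⊆ Set.Icc x₀ X := Set.Icc_subset_Icc le_rfl hx.2
    have hcont : ContinuousOn y (Set.Icc x₀ x) := fun t ht =>
      ((hy t (hsub ht)).continuousAt).continuousWithinAt
    obtain ⟨c, _, hc⟩ := exists_hasDerivAt_eq_slope y (fun t => f (y t)) hx.1 hcont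
      (fun t ht => hy t (hsub (Set.Ioo_subset_Icc_self ht)))
    exact ⟨y c, by rw [hc, hy₀]⟩
  refine ⟨hrange, ?_, ?_⟩
  · intro x hx
    rw [Function.invFun_eq (hrange x hx)]
    field_simp [sub_ne_zero.mpr hx.1.ne']
    ring
  · intro x hx
    have hx' : x ∈ Set.Ioc x₀ X := ⟨hx.1, hx.2.le⟩
    obtain ⟨a, ha⟩ := hrange x hx'
    have hyd : DifferentiableAt ℝ y x :=
      (hy x ⟨hx.1.le, hx.2.le⟩).differentiableAt
    have hgd : DifferentiableAt ℝ (fun x => (y x - y₀) / (x - x₀)) x :=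
      ((hyd.sub_const y₀).div ((differentiableAt_id.sub_const x₀))
        (sub_ne_zero.mpr hx.1.ne'))
    have := (ha ▸ invFun_diff f hf hf' a : DifferentiableAt ℝ (Function.invFun f)
      ((y x - y₀) / (x - x₀)))
    exact (this.comp x hgd).differentiableWithinAt
end
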